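/- Let y be an analytic solution near r = 0 of the n-dimensional Calabi Cauchy problem (y'/r)^{n−1}·y'' = e^y, y'(0) = 0, y''(0) = e^{y(0)/n}. Then all odd-order derivatives of y vanish at 0: y^{(2j+1)}(0) = 0 for every j ∈ ℕ. -/

import Mathlib

open Real Set Filter Topology


/-- `f` vanishes to order at least `m` at `0`, with `m`-th "coefficient function value" `c`. -/
def vOrd (m : ℕ) (c : ℝ) (f : ℝ → ℝ) : Prop :=
  ∃ g : ℝ → ℝ, AnalyticAt ℝ g 0 ∧ g 0 = c ∧ ∀ᶠ r in 𝓝 (0:ℝ), f r = r ^ m * g r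

lemma analyticAt_deriv {f : ℝ → ℝ} (hf : AnalyticAt ℝ f 0) : AnalyticAt ℝ (deriv f) 0 := by
  obtain ⟨s, hs, h⟩ := hf.exists_mem_nhds_analyticOnNhd
  exact h.deriv 0 (mem_of_mem_nhds hs)

lemma vOrd_congr {m : ℕ} {c : ℝ} {f f' : ℝ → ℝ} (h : f =ᶠ[𝓝 (0:ℝ)] f')
    (hv : vOrd m c f) : vOrd m c f' := by
  obtain ⟨g, hg, hg0, hev⟩ := hv
  refine ⟨g, hg, hg0, ?_⟩
  filter_upwards [h, hev] with r h1 h2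
  rw [← h1, h2]

lemma vOrd_of_eq {m : ℕ} {c d : ℝ} {f : ℝ → ℝ} (hv : vOrd m c f) (h : c = d) : vOrd m d f :=
  h ▸ hv

lemma vOrd_zero_fun (m : ℕ) : vOrd m 0 (fun _ => (0:ℝ)) :=
  ⟨fun _ => 0, analyticAt_const, rfl, by filter_upwards with r; simp⟩

lemma vOrd_of_eventually_zero {m : ℕ} {f : ℝ → ℝ} (h : f =ᶠ[𝓝 (0:ℝ)] 0) : vOrd m 0 f :=
  vOrd_congr (f := fun _ => 0) (by filter_upwards [h] with r hr; simp [hr]) (vOrd_zero_fun m)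

lemma vOrd_analytic {f : ℝ → ℝ} (hf : AnalyticAt ℝ f 0) : vOrd 0 (f 0) f :=
  ⟨f, hf, rfl, by filter_upwards with r; simp⟩

lemma vOrd.mul {m p : ℕ} {c d : ℝ} {f h : ℝ → ℝ} (hf : vOrd m c f) (hh : vOrd p d h) :
    vOrd (m + p) (c * d) (fun r => f r * h r) := by
  obtain ⟨g1, hg1, hg10, hev1⟩ := hf
  obtain ⟨g2, hg2, hg20, hev2⟩ := hh
  refine ⟨fun r => g1 r * g2 r, hg1.mul hg2, by simp [hg10, hg20], ?_⟩
  filter_upwards [hev1, hev2] with r h1 h2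
  rw [h1, h2, pow_add]; ring

lemma vOrd.add {m : ℕ} {c d : ℝ} {f h : ℝ → ℝ} (hf : vOrd m c f) (hh : vOrd m d h) :
    vOrd m (c + d) (fun r => f r + h r) := by
  obtain ⟨g1, hg1, hg10, hev1⟩ := hf
  obtain ⟨g2, hg2, hg20, hev2⟩ := hh
  refine ⟨fun r => g1 r + g2 r, hg1.add hg2, by simp [hg10, hg20], ?_⟩
  filter_upwards [hev1, hev2] with r h1 h2
  rw [h1, h2]; ring

lemma vOrd.pow {m : ℕ} {c : ℝ} {f : ℝ → ℝ} (hf : vOrd m c f) (p : ℕ) :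
    vOrd (p * m) (c ^ p) (fun r => f r ^ p) := by
  induction p with
  | zero => simpa using vOrd_analytic (f := fun _ => (1:ℝ)) analyticAt_const
  | succ q ih =>
      have h2 := (ih.mul hf)
      have h3 : vOrd (q * m + m) (c ^ (q + 1)) (fun r => f r ^ (q + 1)) := by
        refine vOrd_congr ?_ (vOrd_of_eq h2 (by ring))
        filter_upwards with r
        rw [pow_succ]
      rw [Nat.succ_mul]
      exact h3

lemma vOrd_sum {m : ℕ} {ι : Type*} (s : Finset ι) (c : ι → ℝ) (f : ι → ℝ → ℝ)
    (h : ∀ i ∈ s, vOrd m (c i) (f i)) :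
    vOrd m (∑ i ∈ s, c i) (fun r => ∑ i ∈ s, f i r) := by
  classical
  induction s using Finset.induction with
  | empty => simpa using vOrd_zero_fun m
  | insert _ _ hx ih =>
      rename_i a s
      rw [Finset.sum_insert hx]
      have h1 := h a (Finset.mem_insert_self a s)
      have h2 := ih fun i hi => h i (Finset.mem_insert_of_mem hi)
      refine vOrd_congr ?_ (h1.add h2)
      filter_upwards with r
      rw [Finset.sum_insert hx]

lemma vOrd_val0 {c : ℝ} {f : ℝ → ℝ} (h : vOrd 0 c f) : f 0 = c := by
  obtain ⟨g, hg, hg0, hev⟩ := h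
  have := hev.self_of_nhds
  simpa [hg0] using this

lemma vOrd_valpos {m : ℕ} {c : ℝ} {f : ℝ → ℝ} (h : vOrd m c f) (hm : 0 < m) : f 0 = 0 := by
  obtain ⟨g, hg, hg0, hev⟩ := h
  have := hev.self_of_nhds
  simpa [zero_pow hm.ne'] using this

lemma vOrd.deriv {m : ℕ} {c : ℝ} {f : ℝ → ℝ} (h : vOrd (m + 1) c f) :
    vOrd m (((m:ℝ) + 1) * c) (deriv f) := by
  obtain ⟨g, hg, hg0, hev⟩ := h
  refine ⟨fun r => ((m:ℝ) + 1) * g r + r * _root_.deriv g r,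
    ((analyticAt_const.mul hg).add ((analyticAt_id).mul (analyticAt_deriv hg))), by simp [hg0], ?_⟩
  have hdg : ∀ᶠ r in 𝓝 (0:ℝ), DifferentiableAt ℝ g r :=
    hg.eventually_analyticAt.mono fun _ h => h.differentiableAt
  have heq : f =ᶠ[𝓝 (0:ℝ)] fun r => r ^ (m + 1) * g r := hev
  filter_upwards [heq.deriv, hdg] with r h1 h2
  rw [h1, deriv_fun_mul (differentiableAt_pow _) h2, deriv_pow_field, Nat.add_sub_cancel]
  push_cast
  ring

lemma vOrd_le {m : ℕ} {c : ℝ} {f : ℝ → ℝ} (h : vOrd m c f) {q : ℕ} (hq : q ≤ m) :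
    ∃ d, vOrd q d f := by
  obtain ⟨g, hg, hg0, hev⟩ := h
  refine ⟨(0:ℝ) ^ (m - q) * c, fun r => r ^ (m - q) * g r,
    ((analyticAt_id).pow _).mul hg, by simp [hg0], ?_⟩
  filter_upwards [hev] with r h1
  rw [h1, ← mul_assoc, ← pow_add]
  congr 2
  omega

lemma vOrd_unique {p q : ℕ} {c d : ℝ} {f : ℝ → ℝ} (h1 : vOrd p c f) (h2 : vOrd q d f)
    (hpq : p < q) : c = 0 := by
  obtain ⟨g1, hg1, hg10, hev1⟩ := h1
  obtain ⟨g2, hg2, hg20, hev2⟩ := h2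
  have hne : (𝓝[≠] (0:ℝ)).NeBot := inferInstance
  have hev : ∀ᶠ r in 𝓝[≠] (0:ℝ), g1 r = r ^ (q - p) * g2 r := by
    filter_upwards [hev1.filter_mono nhdsWithin_le_nhds, hev2.filter_mono nhdsWithin_le_nhds,
      self_mem_nhdsWithin] with r ha hb (hr : r ≠ 0)
    have hrp : r ^ p ≠ 0 := pow_ne_zero _ hr
    apply mul_left_cancel₀ hrp
    rw [← ha, hb, ← mul_assoc, ← pow_add]
    congr 2
    omega
  have t1 : Filter.Tendsto g1 (𝓝[≠] (0:ℝ)) (𝓝 c) := by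
    rw [← hg10]
    exact hg1.continuousAt.continuousWithinAt
  have t2 : Filter.Tendsto (fun r : ℝ => r ^ (q - p) * g2 r) (𝓝[≠] (0:ℝ)) (𝓝 0) := by
    have : ContinuousAt (fun r : ℝ => r ^ (q - p) * g2 r) 0 :=
      (continuousAt_pow _ _).mul hg2.continuousAt
    have h0 : (fun r : ℝ => r ^ (q - p) * g2 r) 0 = 0 := by
      simp [zero_pow (by omega : q - p ≠ 0)]
    exact tendsto_nhdsWithin_of_tendsto_nhds (by simpa [h0] using this.tendsto)
  exact tendsto_nhds_unique (t1.congr' hev) t2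

lemma exists_vOrd {f : ℝ → ℝ} (hf : AnalyticAt ℝ f 0) :
    f =ᶠ[𝓝 (0:ℝ)] 0 ∨ ∃ (j : ℕ) (d : ℝ), d ≠ 0 ∧ vOrd j d f := by
  by_cases h : ∀ᶠ z in 𝓝 (0:ℝ), f z = 0
  · exact Or.inl h
  · right
    have hord : analyticOrderAt f 0 ≠ ⊤ := fun ht => h (analyticOrderAt_eq_top.mp ht)
    obtain ⟨j, hj⟩ := Option.ne_none_iff_exists'.mp hord
    obtain ⟨g, hg, hg0, hev⟩ := (hf.analyticOrderAt_eq_natCast (n := j)).mp (by exact_mod_cast hj)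
    refine ⟨j, g 0, hg0, g, hg, rfl, ?_⟩
    filter_upwards [hev] with r hr
    rw [hr, sub_zero, smul_eq_mul]

lemma vOrd_one_of {f : ℝ → ℝ} (hf : AnalyticAt ℝ f 0) (h0 : f 0 = 0)
    (hd : _root_.deriv f 0 ≠ 0) : vOrd 1 (_root_.deriv f 0) f := by
  rcases exists_vOrd hf with h | ⟨j, d, hdne, hv⟩
  · exact absurd (by rw [h.deriv_eq]; exact deriv_const _ _) hd
  · match j, hv with
    | 0, hv => exact absurd (h0 ▸ (vOrd_val0 hv).symm) hdne
    | 1, hv =>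
        have := vOrd_val0 hv.deriv
        simp only [Nat.cast_zero, zero_add, one_mul] at this
        rwa [this]
    | (m + 2), hv =>
        have h' := hv.deriv
        exact absurd (vOrd_valpos h' (by omega)) hd



/-- For an analytic solution near `0` of the n-dimensional Calabi Cauchy problem
`(y'/r)^{n-1} y'' = e^y`, `y'(0) = 0`, `y''(0) = e^{y(0)/n}`, all odd-order
derivatives of `y` vanish at `0`. -/
theorem calabi_odd_derivatives_vanish
    (n : ℕ) (hn : 1 ≤ n) (ε : ℝ) (hε : 0 < ε) (y : ℝ → ℝ)
    (hanalytic : AnalyticOnNhd ℝ y (Ioo (-ε) ε))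
    (hode : ∀ r ∈ Ioo (0:ℝ) ε,
      (deriv y r / r) ^ (n - 1) * deriv (deriv y) r = Real.exp (y r))
    (h1 : deriv y 0 = 0)
    (h2 : deriv (deriv y) 0 = Real.exp (y 0 / n)) :
    ∀ j : ℕ, iteratedDeriv (2 * j + 1) y 0 = 0 := by
  classical
  obtain ⟨m, rfl⟩ : ∃ m, n = m + 1 := ⟨n - 1, by omega⟩
  simp only [Nat.add_sub_cancel] at hode
  intro j
  set b : ℝ := Real.exp (y 0 / (m + 1 : ℕ)) with hbdef
  have hb : 0 < b := Real.exp_pos _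
  have h0mem : (0:ℝ) ∈ Ioo (-ε) ε := ⟨by linarith, hε⟩
  have hyA : AnalyticAt ℝ y 0 := hanalytic 0 h0mem
  set t : ℝ → ℝ := fun r => y (-r) with htdef
  have htA : AnalyticAt ℝ t 0 := by
    have h' : AnalyticAt ℝ y (-(0:ℝ)) := by rw [neg_zero]; exact hyA
    exact h'.comp (analyticAt_id.neg)
  have ht' : deriv t = fun r => -deriv y (-r) := funext fun r => deriv_comp_neg y r
  have ht'' : deriv (deriv t) = fun r => deriv (deriv y) (-r) := by
    rw [ht']
    funext r
    have hneg : deriv (fun x : ℝ => -deriv y (-x)) r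
        = -deriv (fun x : ℝ => deriv y (-x)) r := deriv.neg
    rw [hneg, deriv_comp_neg, neg_neg]
  have hty'0 : deriv t 0 = 0 := by rw [ht']; simp [h1]
  have hty''0 : deriv (deriv t) 0 = b := by rw [ht'']; simpa using h2
  -- extend the ODE to the whole interval by the identity theorem
  have hyderivA : AnalyticOnNhd ℝ (deriv y) (Ioo (-ε) ε) := hanalytic.deriv
  have hyderiv2A : AnalyticOnNhd ℝ (deriv (deriv y)) (Ioo (-ε) ε) := hyderivA.deriv
  have hP0 : EqOn (fun r => deriv y r ^ m * deriv (deriv y) r - r ^ m * Real.exp (y r))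
      0 (Ioo (-ε) ε) := by
    have hPA : AnalyticOnNhd ℝ
        (fun r => deriv y r ^ m * deriv (deriv y) r - r ^ m * Real.exp (y r))
        (Ioo (-ε) ε) := by
      apply AnalyticOnNhd.sub
      · exact (hyderivA.pow m).mul hyderiv2A
      · exact ((analyticOnNhd_id).pow m).mul
          (fun x hx => (analyticAt_rexp).comp (hanalytic x hx))
    apply hPA.eqOn_zero_of_preconnected_of_eventuallyEq_zero (isPreconnected_Ioo)
      (show (ε/2) ∈ Ioo (-ε) ε from ⟨by linarith, by linarith⟩)
    have hmem : Ioo (0:ℝ) ε ∈ 𝓝 (ε/2) := isOpen_Ioo.mem_nhds ⟨by linarith, by linarith⟩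
    filter_upwards [hmem] with r hr
    have h := hode r hr
    have hrne : r ≠ 0 := ne_of_gt hr.1
    have hcan : deriv y r ^ m = (deriv y r / r) ^ m * r ^ m := by
      rw [← mul_pow, div_mul_cancel₀ _ hrne]
    show deriv y r ^ m * deriv (deriv y) r - r ^ m * Real.exp (y r) = 0
    rw [hcan, ← h]
    ring
  have hyODE : ∀ᶠ r in 𝓝 (0:ℝ),
      deriv y r ^ m * deriv (deriv y) r = r ^ m * Real.exp (y r) := by
    filter_upwards [isOpen_Ioo.mem_nhds h0mem] with r hr
    exact sub_eq_zero.mp (hP0 hr)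
  have htODE : ∀ᶠ r in 𝓝 (0:ℝ),
      deriv t r ^ m * deriv (deriv t) r = r ^ m * Real.exp (t r) := by
    filter_upwards [isOpen_Ioo.mem_nhds h0mem] with r hr
    have hrm : -r ∈ Ioo (-ε) ε := ⟨by linarith [hr.2], by linarith [hr.1]⟩
    have key : deriv y (-r) ^ m * deriv (deriv y) (-r) = (-r) ^ m * Real.exp (y (-r)) :=
      sub_eq_zero.mp (hP0 hrm)
    have hstep : deriv t r ^ m * deriv (deriv t) r
        = (-1:ℝ) ^ m * (deriv y (-r) ^ m * deriv (deriv y) (-r)) := by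
      rw [ht'', ht']
      show (-deriv y (-r)) ^ m * deriv (deriv y) (-r) = _
      rw [neg_pow]
      ring
    rw [hstep, key, neg_pow]
    have hsq : ((-1:ℝ))^m * ((-1:ℝ))^m = 1 := by rw [← mul_pow]; norm_num
    simp only [htdef]
    linear_combination (r ^ m * Real.exp (y (-r))) * hsq
  -- the reflected difference
  set u : ℝ → ℝ := fun r => y r - t r with hudef
  have huA : AnalyticAt ℝ u 0 := hyA.sub htA
  have hu0 : u 0 = 0 := by simp [hudef, htdef]
  have hyd : ∀ᶠ r in 𝓝 (0:ℝ), DifferentiableAt ℝ y r :=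
    hyA.eventually_analyticAt.mono fun _ h => h.differentiableAt
  have htd : ∀ᶠ r in 𝓝 (0:ℝ), DifferentiableAt ℝ t r :=
    htA.eventually_analyticAt.mono fun _ h => h.differentiableAt
  have hy'd : ∀ᶠ r in 𝓝 (0:ℝ), DifferentiableAt ℝ (deriv y) r :=
    (analyticAt_deriv hyA).eventually_analyticAt.mono fun _ h => h.differentiableAt
  have ht'd : ∀ᶠ r in 𝓝 (0:ℝ), DifferentiableAt ℝ (deriv t) r :=
    (analyticAt_deriv htA).eventually_analyticAt.mono fun _ h => h.differentiableAt
  have hu' : deriv u =ᶠ[𝓝 (0:ℝ)] fun r => deriv y r - deriv t r := by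
    filter_upwards [hyd, htd] with r hh1 hh2
    simp only [hudef]
    exact deriv_sub hh1 hh2
  have hu'' : deriv (deriv u) =ᶠ[𝓝 (0:ℝ)]
      fun r => deriv (deriv y) r - deriv (deriv t) r := by
    refine hu'.deriv.trans ?_
    filter_upwards [hy'd, ht'd] with r hh1 hh2
    exact deriv_sub hh1 hh2
  have hu'0 : deriv u 0 = 0 := by
    rw [hu'.eq_of_nhds, h1, hty'0, sub_zero]
  have hu''0 : deriv (deriv u) 0 = 0 := by
    rw [hu''.eq_of_nhds, h2, hty''0]
    simp [hbdef]
  -- basic vanishing orders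
  have hy'v : vOrd 1 b (deriv y) := by
    have h' := vOrd_one_of (analyticAt_deriv hyA) h1 (by rw [h2]; exact (Real.exp_pos _).ne')
    rwa [h2] at h'
  have ht'v : vOrd 1 b (deriv t) := by
    have h' := vOrd_one_of (analyticAt_deriv htA) hty'0 (by rw [hty''0]; exact hb.ne')
    rwa [hty''0] at h'
  have hy''v : vOrd 0 b (deriv (deriv y)) := by
    have h' := vOrd_analytic (analyticAt_deriv (analyticAt_deriv hyA))
    rwa [h2] at h'
  have hEy : AnalyticAt ℝ (fun r => Real.exp (y r)) 0 := (analyticAt_rexp).comp hyA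
  have hEt : AnalyticAt ℝ (fun r => Real.exp (t r)) 0 := (analyticAt_rexp).comp htA
  set F : ℝ → ℝ := fun r => Real.exp (y r) - Real.exp (t r) with hFdef
  have hFA : AnalyticAt ℝ F 0 := hEy.sub hEt
  have hF0 : F 0 = 0 := by simp [hFdef, htdef]
  have hF' : deriv F =ᶠ[𝓝 (0:ℝ)]
      fun r => deriv u r * Real.exp (y r) + deriv t r * F r := by
    filter_upwards [hyd, htd, hu'] with r hh1 hh2 hh3
    have e1 : deriv (fun s => Real.exp (y s)) r = Real.exp (y r) * deriv y r :=
      (hh1.hasDerivAt.exp).deriv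
    have e2 : deriv (fun s => Real.exp (t s)) r = Real.exp (t r) * deriv t r :=
      (hh2.hasDerivAt.exp).deriv
    have e3 : deriv F r = deriv (fun s => Real.exp (y s)) r
        - deriv (fun s => Real.exp (t s)) r := by
      simp only [hFdef]
      exact deriv_sub hh1.exp hh2.exp
    rw [e3, e1, e2, hh3]
    simp only [hFdef]
    ring
  -- main dichotomy
  rcases exists_vOrd huA with hzero | ⟨k, c, hc, huv⟩
  · -- u vanishes near 0, so y is even near 0
    have hyt : y =ᶠ[𝓝 (0:ℝ)] t := by
      filter_upwards [hzero] with r hr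
      have : y r - t r = 0 := hr
      linarith
    have e1 : iteratedDeriv (2*j+1) y 0 = iteratedDeriv (2*j+1) t 0 :=
      hyt.iteratedDeriv_eq _
    have e2 : iteratedDeriv (2*j+1) t 0
        = (-1:ℝ)^(2*j+1) • iteratedDeriv (2*j+1) y (-0) := iteratedDeriv_comp_neg _ _ _
    rw [neg_zero] at e2
    have hodd : ((-1:ℝ))^(2*j+1) = -1 := Odd.neg_one_pow ⟨j, by ring⟩
    rw [hodd, smul_eq_mul] at e2
    have := e1.trans e2
    linarith
  · exfalso
    -- the order of u is at least 3
    have hk3 : 3 ≤ k := by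
      by_contra hlt
      push_neg at hlt
      interval_cases k
      · have h' := vOrd_val0 huv
        rw [hu0] at h'
        exact hc h'.symm
      · have h' := vOrd_val0 (show vOrd (0+1) c u from huv).deriv
        rw [hu'0] at h'
        exact hc (by push_cast at h'; linarith)
      · have p1 := (show vOrd (1+1) c u from huv).deriv
        have h' := vOrd_val0 (show vOrd (0+1) _ (deriv u) from p1).deriv
        rw [hu''0] at h'
        exact hc (by push_cast at h'; linarith)
    obtain ⟨k', rfl⟩ : ∃ k', k = k' + 3 := ⟨k - 3, by omega⟩
    have hu'v := (show vOrd ((k'+2)+1) c u from huv).deriv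
    have hu''v := (show vOrd ((k'+1)+1) _ (deriv u) from hu'v).deriv
    -- F vanishes to order at least k'+3
    have hFord : ∃ d, vOrd (k'+3) d F := by
      rcases exists_vOrd hFA with hz | ⟨p, d, hd, hFv⟩
      · exact ⟨0, vOrd_of_eventually_zero hz⟩
      · by_cases hp : k'+3 ≤ p
        · exact vOrd_le hFv hp
        · exfalso
          push_neg at hp
          match p, hFv, hp with
          | 0, hFv, _ =>
              have h' := vOrd_val0 hFv
              rw [hF0] at h'
              exact hd h'.symm
          | (p'+1), hFv, hp =>
              have hder := hFv.deriv
              have hA1 := hu'v.mul (vOrd_analytic hEy)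
              have hA2 := ht'v.mul hFv
              obtain ⟨d1, hB1⟩ := vOrd_le hA1 (show p'+1 ≤ (k'+2)+0 by omega)
              obtain ⟨d2, hB2⟩ := vOrd_le hA2 (show p'+1 ≤ 1+(p'+1) by omega)
              have hsum := hB1.add hB2
              have hcomb : vOrd (p'+1) (d1 + d2) (deriv F) :=
                vOrd_congr hF'.symm hsum
              have hz := vOrd_unique hder hcomb (by omega)
              have hne : ((p':ℝ)+1) ≠ 0 := by positivity
              exact hd ((mul_eq_zero.mp hz).resolve_left hne)
    -- W has a nonzero coefficient at low order
    set W : ℝ → ℝ := fun r =>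
      deriv y r ^ m * deriv (deriv y) r - deriv t r ^ m * deriv (deriv t) r with hWdef
    have hWhigh : ∃ d, vOrd (m + (k'+3)) d W := by
      obtain ⟨d, hF3⟩ := hFord
      have hid : vOrd m 1 (fun r : ℝ => r ^ m) :=
        ⟨fun _ => 1, analyticAt_const, rfl, by filter_upwards with r; ring⟩
      refine ⟨1*d, vOrd_congr ?_ (hid.mul hF3)⟩
      filter_upwards [hyODE, htODE] with r e1 e2
      simp only [hWdef, hFdef]
      rw [e1, e2]
      ring
    have hWlow : ∃ L, L ≠ 0 ∧ vOrd (m + (k'+1)) L W := by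
      have hT1 := (ht'v.pow m).mul hu''v
      rw [show m * 1 = m from by omega] at hT1
      set S : ℝ → ℝ := fun r => ∑ i ∈ Finset.range m,
        deriv y r ^ i * deriv t r ^ (m - 1 - i) with hSdef
      have hT2 : vOrd (m + (k'+1)) ((((k'+2:ℕ):ℝ) + 1) * c * (↑m * b ^ (m-1)) * b)
          (fun r => deriv u r * S r * deriv (deriv y) r) := by
        by_cases hm0 : m = 0
        · refine vOrd_of_eq (vOrd_of_eventually_zero ?_) (by simp [hm0])
          filter_upwards with r
          simp [hSdef, hm0]
        · have hm1 : 1 ≤ m := by omega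
          have hterm : ∀ i ∈ Finset.range m,
              vOrd (m-1) ((fun _ : ℕ => b^(m-1)) i)
                ((fun i r => deriv y r ^ i * deriv t r ^ (m - 1 - i)) i) := by
            intro i hi
            simp only [Finset.mem_range] at hi
            have h' := (hy'v.pow i).mul (ht'v.pow (m-1-i))
            rw [show i*1 + (m-1-i)*1 = m-1 from by omega] at h'
            exact vOrd_of_eq h' (by rw [← pow_add]; congr 1; omega)
          have hSv := vOrd_sum (Finset.range m) (fun _ : ℕ => b^(m-1))
            (fun i r => deriv y r ^ i * deriv t r ^ (m - 1 - i)) hterm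
          simp only [Finset.sum_const, Finset.card_range, nsmul_eq_mul] at hSv
          have hSv' : vOrd (m-1) (↑m * b^(m-1)) S := by
            refine vOrd_congr ?_ hSv
            filter_upwards with r
            rfl
          have hT2' := (hu'v.mul hSv').mul hy''v
          rw [show (k'+2) + (m-1) + 0 = m + (k'+1) from by omega] at hT2'
          exact hT2'
      have hadd := hT1.add hT2
      refine ⟨_, ?_, vOrd_congr ?_ hadd⟩
      · -- nonvanishing of the leading coefficient
        by_cases hm0 : m = 0
        · simp only [hm0, pow_zero, Nat.cast_zero, zero_mul, mul_zero, one_mul,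
            add_zero, zero_add]
          exact mul_ne_zero (by positivity) (mul_ne_zero (by positivity) hc)
        · have hm1 : 1 ≤ m := by omega
          have hb1 : b^(m-1) * b = b^m := by
            rw [← pow_succ]
            congr 1
            omega
          have hne : b ^ m * ((((k'+1:ℕ):ℝ) + 1) * ((((k'+2:ℕ):ℝ) + 1) * c))
              + (((k'+2:ℕ):ℝ) + 1) * c * (↑m * b ^ (m-1)) * b
              = c * ((((k'+2:ℕ):ℝ) + 1) * b ^ m * ((((k'+1:ℕ):ℝ) + 1) + ↑m)) := by
            linear_combination ((((k'+2:ℕ):ℝ) + 1) * c * (↑m : ℝ)) * hb1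
          rw [hne]
          refine mul_ne_zero hc ?_
          have hpos : (0:ℝ) < (((k'+2:ℕ):ℝ) + 1) * b ^ m * ((((k'+1:ℕ):ℝ) + 1) + ↑m) := by
            positivity
          exact hpos.ne'
      · -- the combination equals W near 0
        filter_upwards [hu', hu''] with r e1 e2
        have hgs := geom_sum₂_mul (deriv y r) (deriv t r) m
        simp only [hWdef, hSdef]
        rw [e1, e2]
        linear_combination deriv (deriv y) r * hgs
    obtain ⟨L, hL, hWlow'⟩ := hWlow
    obtain ⟨d, hWhigh'⟩ := hWhigh
    exact hL (vOrd_unique hWlow' hWhigh' (by omega))
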